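/- arXiv:math/0307262 — 3 statements merged into one kernel-verified Lean document; each statement's English description precedes it below -/
import Mathlib

section
/- Let n be a positive integer and 0 < α < n. Then there exists a constant c > 0 such that the function u(x) = c |x|^{−(n−α)/2} satisfies the critical integral equation u(x) = ∫_{ℝⁿ} |x−y|^{−(n−α)} u(y)^{(n+α)/(n−α)} dy for every x ≠ 0. -/
open MeasureTheory Metric Set Module Filter
open scoped ENNReal

section Aux

variable {n : ℕ}

private lemma sps_meas (x : EuclideanSpace ℝ (Fin n)) (a b : ℝ) :
    Measurable (fun y : EuclideanSpace ℝ (Fin n) => ‖x - y‖ ^ (-a) * ‖y‖ ^ (-b)) := by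
  fun_prop

/-- `‖z‖ ^ (-s)` is integrable on a ball around the origin when `s < n`. -/
private lemma sps_ball (hn : 0 < n) {s : ℝ} (hs0 : 0 < s) (hsn : s < n) (R : ℝ) :
    IntegrableOn (fun z : EuclideanSpace ℝ (Fin n) => ‖z‖ ^ (-s)) (ball 0 R) := by
  have hmeas : Measurable fun z : EuclideanSpace ℝ (Fin n) => ‖z‖ ^ (-s) := by
    fun_prop
  refine ⟨hmeas.aestronglyMeasurable, ?_⟩
  have h1 : (∫⁻ z, ‖(‖z‖ : ℝ) ^ (-s)‖ₑ
        ∂(volume.restrict (ball (0 : EuclideanSpace ℝ (Fin n)) R)))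
      = ∫⁻ z, ENNReal.ofReal (‖z‖ ^ (-s))
        ∂(volume.restrict (ball (0 : EuclideanSpace ℝ (Fin n)) R)) :=
    lintegral_enorm_of_nonneg fun z => Real.rpow_nonneg (norm_nonneg _) _
  rw [HasFiniteIntegral, h1, lintegral_eq_lintegral_meas_le _
    (Eventually.of_forall fun z => Real.rpow_nonneg (norm_nonneg _) _) hmeas.aemeasurable]
  set μ := volume.restrict (ball (0 : EuclideanSpace ℝ (Fin n)) R)
  have hsub : ∀ t : ℝ, 0 < t →
      {a : EuclideanSpace ℝ (Fin n) | t ≤ ‖a‖ ^ (-s)} ⊆ closedBall 0 (t ^ (-s⁻¹)) := by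
    intro t ht z hz
    rw [mem_closedBall_zero_iff]
    rcases eq_or_ne z 0 with rfl | hz0
    · simpa using Real.rpow_nonneg ht.le _
    have hna : 0 < ‖z‖ := norm_pos_iff.2 hz0
    calc ‖z‖ = ‖z‖ ^ ((-s) * (-s⁻¹)) := by
          rw [neg_mul_neg, mul_inv_cancel₀ hs0.ne', Real.rpow_one]
      _ = (‖z‖ ^ (-s)) ^ (-s⁻¹) := Real.rpow_mul (norm_nonneg z) _ _
      _ ≤ t ^ (-s⁻¹) := by
          exact (Real.rpow_le_rpow_iff_of_neg (Real.rpow_pos_of_pos hna _) ht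
            (neg_lt_zero.mpr (inv_pos.mpr hs0))).mpr hz
  have hball : ∀ t : ℝ, μ {a : EuclideanSpace ℝ (Fin n) | t ≤ ‖a‖ ^ (-s)}
      ≤ volume (ball (0 : EuclideanSpace ℝ (Fin n)) R) := fun t => by
    refine le_trans (measure_mono (subset_univ _)) ?_
    rw [Measure.restrict_apply_univ]
  calc ∫⁻ t in Ioi (0:ℝ), μ {a | t ≤ ‖a‖ ^ (-s)}
      ≤ ∫⁻ t in Ioc (0:ℝ) 1 ∪ Ioi 1, μ {a | t ≤ ‖a‖ ^ (-s)} :=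
        lintegral_mono_set Ioi_subset_Ioc_union_Ioi
    _ ≤ (∫⁻ t in Ioc (0:ℝ) 1, μ {a | t ≤ ‖a‖ ^ (-s)})
        + ∫⁻ t in Ioi (1:ℝ), μ {a | t ≤ ‖a‖ ^ (-s)} := lintegral_union_le _ _ _
    _ < ∞ := by
        refine ENNReal.add_lt_top.2 ⟨?_, ?_⟩
        · calc (∫⁻ t in Ioc (0:ℝ) 1, μ {a | t ≤ ‖a‖ ^ (-s)})
              ≤ ∫⁻ _ in Ioc (0:ℝ) 1, volume (ball (0 : EuclideanSpace ℝ (Fin n)) R) :=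
                setLIntegral_mono' measurableSet_Ioc fun t _ => hball t
            _ = volume (ball (0 : EuclideanSpace ℝ (Fin n)) R) * volume (Ioc (0:ℝ) 1) :=
                setLIntegral_const _ _
            _ < ∞ := ENNReal.mul_lt_top measure_ball_lt_top measure_Ioc_lt_top
        · have hbound : ∀ t ∈ Ioi (1:ℝ), μ {a | t ≤ ‖a‖ ^ (-s)}
              ≤ ENNReal.ofReal (t ^ (-s⁻¹ * n)) * volume (ball (0 : EuclideanSpace ℝ (Fin n)) 1) := by
            intro t ht
            have ht0 : (0:ℝ) < t := lt_trans one_pos ht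
            refine le_trans (le_trans (Measure.restrict_le_self _)
              (measure_mono (hsub t ht0))) ?_
            rw [Measure.addHaar_closedBall _ _ (Real.rpow_nonneg ht0.le _),
              finrank_euclideanSpace_fin, ← Real.rpow_natCast (t ^ (-s⁻¹)) n,
              ← Real.rpow_mul ht0.le]
          calc (∫⁻ t in Ioi (1:ℝ), μ {a | t ≤ ‖a‖ ^ (-s)})
              ≤ ∫⁻ t in Ioi (1:ℝ), ENNReal.ofReal (t ^ (-s⁻¹ * n))
                  * volume (ball (0 : EuclideanSpace ℝ (Fin n)) 1) :=
                setLIntegral_mono' measurableSet_Ioi hbound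
            _ = (∫⁻ t in Ioi (1:ℝ), ENNReal.ofReal (t ^ (-s⁻¹ * n)))
                  * volume (ball (0 : EuclideanSpace ℝ (Fin n)) 1) :=
                lintegral_mul_const' _ _ measure_ball_lt_top.ne
            _ < ∞ := by
                refine ENNReal.mul_lt_top ?_ measure_ball_lt_top
                refine IntegrableOn.setLIntegral_lt_top ?_
                refine integrableOn_Ioi_rpow_of_lt ?_ one_pos
                have h1 : (1:ℝ) < s⁻¹ * n := by
                  rw [← div_eq_inv_mul]
                  exact (one_lt_div hs0).mpr hsn
                linarith
end Aux

section Aux2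

variable {n : ℕ}

/-- `‖z‖ ^ (-t)` is integrable outside a ball around the origin when `t > n`. -/
private lemma sps_compl (hn : 0 < n) {t R : ℝ} (hnt : (n : ℝ) < t) (hR : 0 < R) :
    IntegrableOn (fun z : EuclideanSpace ℝ (Fin n) => ‖z‖ ^ (-t)) (ball 0 R)ᶜ := by
  have ht0 : 0 < t := lt_of_le_of_lt (Nat.cast_nonneg n) hnt
  have hint : Integrable
      (fun z : EuclideanSpace ℝ (Fin n) => (1 + R⁻¹) ^ t * (1 + ‖z‖) ^ (-t)) :=
    (integrable_one_add_norm (by rwa [finrank_euclideanSpace_fin])).const_mul _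
  refine (hint.integrableOn).mono' (Measurable.aestronglyMeasurable (by fun_prop)) ?_
  filter_upwards [ae_restrict_mem measurableSet_ball.compl] with z hz
  have hz' : R ≤ ‖z‖ := by
    simpa [mem_ball_zero_iff] using hz
  have hz0 : 0 < ‖z‖ := lt_of_lt_of_le hR hz'
  rw [Real.norm_eq_abs, abs_of_nonneg (Real.rpow_nonneg (norm_nonneg z) _)]
  have hR1 : (0:ℝ) < 1 + R⁻¹ := by positivity
  have h1z : 1 + ‖z‖ ≤ (1 + R⁻¹) * ‖z‖ := by
    have : R * R⁻¹ = 1 := mul_inv_cancel₀ hR.ne'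
    have h2 : R * R⁻¹ ≤ ‖z‖ * R⁻¹ :=
      mul_le_mul_of_nonneg_right hz' (inv_nonneg.mpr hR.le)
    nlinarith
  have e1 : ((1 + R⁻¹) * ‖z‖) ^ (-t) ≤ (1 + ‖z‖) ^ (-t) :=
    (Real.rpow_le_rpow_iff_of_neg (by positivity) (by positivity)
      (neg_lt_zero.mpr ht0)).mpr h1z
  have e2 : ((1 + R⁻¹) * ‖z‖) ^ (-t) = (1 + R⁻¹) ^ (-t) * ‖z‖ ^ (-t) :=
    Real.mul_rpow hR1.le (norm_nonneg z)
  have e3 : (1 + R⁻¹) ^ t * (1 + R⁻¹) ^ (-t) = 1 := by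
    rw [← Real.rpow_add hR1]; simp
  calc ‖z‖ ^ (-t) = (1 + R⁻¹) ^ t * (1 + R⁻¹) ^ (-t) * ‖z‖ ^ (-t) := by rw [e3, one_mul]
    _ = (1 + R⁻¹) ^ t * (((1 + R⁻¹) * ‖z‖) ^ (-t)) := by rw [e2]; ring
    _ ≤ (1 + R⁻¹) ^ t * (1 + ‖z‖) ^ (-t) := by
        exact mul_le_mul_of_nonneg_left e1 (by positivity)

/-- Integrability of the Riesz-type kernel `‖x - y‖ ^ (-a) * ‖y‖ ^ (-b)`. -/
private lemma sps_int (hn : 0 < n) {a b : ℝ} (ha0 : 0 < a) (han : a < n) (hb0 : 0 < b)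
    (hbn : b < n) (hab : (n : ℝ) < a + b) {x : EuclideanSpace ℝ (Fin n)} (hx : x ≠ 0) :
    Integrable (fun y : EuclideanSpace ℝ (Fin n) => ‖x - y‖ ^ (-a) * ‖y‖ ^ (-b)) := by
  have hxn : 0 < ‖x‖ := norm_pos_iff.2 hx
  set m : ℝ := ‖x‖ / 2 with hm_def
  have hm : 0 < m := by positivity
  have hmeas := sps_meas x a b
  -- piece 1 : near the origin
  have h1 : IntegrableOn (fun y : EuclideanSpace ℝ (Fin n) => ‖x - y‖ ^ (-a) * ‖y‖ ^ (-b))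
      (ball 0 m) := by
    refine ((sps_ball hn hb0 hbn m).const_mul (m ^ (-a))).mono'
      hmeas.aestronglyMeasurable ?_
    filter_upwards [ae_restrict_mem measurableSet_ball] with y hy
    have hy' : ‖y‖ < m := by rwa [mem_ball_zero_iff] at hy
    have hxy : m ≤ ‖x - y‖ := by
      have h := norm_sub_norm_le x y
      have : ‖x‖ = 2 * m := by rw [hm_def]; ring
      linarith
    rw [Real.norm_eq_abs, abs_of_nonneg (by positivity)]
    refine mul_le_mul_of_nonneg_right ?_ (Real.rpow_nonneg (norm_nonneg _) _)
    exact (Real.rpow_le_rpow_iff_of_neg (lt_of_lt_of_le hm hxy) hm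
      (neg_lt_zero.mpr ha0)).mpr hxy
  -- piece 2 : near x
  have h2 : IntegrableOn (fun y : EuclideanSpace ℝ (Fin n) => ‖x - y‖ ^ (-a) * ‖y‖ ^ (-b))
      (ball x m) := by
    have hmp : MeasurePreserving (fun y : EuclideanSpace ℝ (Fin n) => x - y)
        volume volume := Measure.measurePreserving_sub_left volume x
    have hpre : (fun y : EuclideanSpace ℝ (Fin n) => x - y) ⁻¹' (ball 0 m) = ball x m := by
      ext y
      simp only [mem_preimage, mem_ball_zero_iff, mem_ball, dist_eq_norm, sub_zero, ← norm_sub_rev x y]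
    have hTint : IntegrableOn (fun y : EuclideanSpace ℝ (Fin n) => ‖x - y‖ ^ (-a))
        (ball x m) := by
      have := (hmp.integrableOn_comp_preimage
        (MeasurableEquiv.subLeft x).measurableEmbedding
        (f := fun z : EuclideanSpace ℝ (Fin n) => ‖z‖ ^ (-a))
        (s := ball 0 m)).mpr (sps_ball hn ha0 han m)
      rwa [hpre] at this
    refine (hTint.const_mul (m ^ (-b))).mono' hmeas.aestronglyMeasurable ?_
    filter_upwards [ae_restrict_mem measurableSet_ball] with y hy
    have hy' : ‖x - y‖ < m := by
      rw [mem_ball, dist_eq_norm] at hy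
      rwa [norm_sub_rev]
    have hyn : m ≤ ‖y‖ := by
      have h := norm_sub_norm_le x (x - y)
      have hxx : x - (x - y) = y := by abel
      rw [hxx] at h
      have : ‖x‖ = 2 * m := by rw [hm_def]; ring
      linarith
    rw [Real.norm_eq_abs, abs_of_nonneg (by positivity), mul_comm (m ^ (-b))]
    refine mul_le_mul_of_nonneg_left ?_ (Real.rpow_nonneg (norm_nonneg _) _)
    exact (Real.rpow_le_rpow_iff_of_neg (lt_of_lt_of_le hm hyn) hm
      (neg_lt_zero.mpr hb0)).mpr hyn
  -- piece 3 : away from both singularities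
  have h3 : IntegrableOn (fun y : EuclideanSpace ℝ (Fin n) => ‖x - y‖ ^ (-a) * ‖y‖ ^ (-b))
      ((ball 0 m ∪ ball x m)ᶜ) := by
    have hcompl : IntegrableOn (fun z : EuclideanSpace ℝ (Fin n) => ‖z‖ ^ (-(a + b)))
        ((ball 0 m ∪ ball x m)ᶜ) :=
      (sps_compl hn hab hm).mono_set (compl_subset_compl.mpr subset_union_left)
    refine (hcompl.const_mul ((4:ℝ) ^ a)).mono' hmeas.aestronglyMeasurable ?_
    filter_upwards [ae_restrict_mem (measurableSet_ball.union measurableSet_ball).compl]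
      with y hy
    simp only [mem_compl_iff, mem_union, not_or] at hy
    obtain ⟨hy0, hyx⟩ := hy
    rw [mem_ball_zero_iff, not_lt] at hy0
    rw [mem_ball, dist_eq_norm, not_lt, ← norm_sub_rev x y] at hyx
    have hyn : 0 < ‖y‖ := lt_of_lt_of_le hm hy0
    have hxyn : 0 < ‖x - y‖ := lt_of_lt_of_le hm hyx
    have h4 : ‖y‖ / 4 ≤ ‖x - y‖ := by
      by_cases hc : ‖y‖ ≤ 4 * m
      · linarith
      · have h := norm_sub_norm_le y x
        have hxx : ‖y - x‖ = ‖x - y‖ := norm_sub_rev _ _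
        have : ‖x‖ = 2 * m := by rw [hm_def]; ring
        rw [hxx] at h
        linarith
    rw [Real.norm_eq_abs, abs_of_nonneg (by positivity)]
    have e1 : ‖x - y‖ ^ (-a) ≤ (‖y‖ / 4) ^ (-a) :=
      (Real.rpow_le_rpow_iff_of_neg hxyn (by positivity)
        (neg_lt_zero.mpr ha0)).mpr h4
    have e2 : (‖y‖ / 4) ^ (-a) = ‖y‖ ^ (-a) * (4:ℝ) ^ a := by
      rw [Real.div_rpow (norm_nonneg y) (by norm_num), Real.rpow_neg (by norm_num : (0:ℝ) ≤ 4),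
        div_eq_mul_inv, inv_inv]
    have e3 : ‖y‖ ^ (-a) * ‖y‖ ^ (-b) = ‖y‖ ^ (-(a + b)) := by
      rw [← Real.rpow_add hyn, neg_add]
    calc ‖x - y‖ ^ (-a) * ‖y‖ ^ (-b) ≤ (‖y‖ / 4) ^ (-a) * ‖y‖ ^ (-b) :=
          mul_le_mul_of_nonneg_right e1 (Real.rpow_nonneg (norm_nonneg _) _)
      _ = (4:ℝ) ^ a * (‖y‖ ^ (-a) * ‖y‖ ^ (-b)) := by rw [e2]; ring
      _ = (4:ℝ) ^ a * ‖y‖ ^ (-(a + b)) := by rw [e3]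
  rw [← integrableOn_univ, ← Set.union_compl_self (ball (0 : EuclideanSpace ℝ (Fin n)) m ∪ ball x m)]
  exact (h1.union h2).union h3

end Aux2

/-- The function `u(x) = c |x|^{-(n-α)/2}` with a suitable constant `c > 0` is a
singular solution of the critical integral equation. -/
theorem singular_power_solution_critical
    (n : ℕ) (hn : 0 < n) (α : ℝ) (hα0 : 0 < α) (hαn : α < n) :
    ∃ c > (0 : ℝ), ∀ x ≠ (0 : EuclideanSpace ℝ (Fin n)),
      c * ‖x‖ ^ (-(((n : ℝ) - α) / 2)) =
        ∫ y : EuclideanSpace ℝ (Fin n),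
          ‖x - y‖ ^ (-((n : ℝ) - α)) *
            (c * ‖y‖ ^ (-(((n : ℝ) - α) / 2))) ^ (((n : ℝ) + α) / ((n : ℝ) - α)) := by
  have hn' : (0:ℝ) < n := by exact_mod_cast hn
  set a : ℝ := (n : ℝ) - α with ha_def
  set b : ℝ := ((n : ℝ) + α) / 2 with hb_def
  set p : ℝ := ((n : ℝ) + α) / a with hp_def
  have ha0 : 0 < a := by rw [ha_def]; linarith
  have han : a < n := by rw [ha_def]; linarith
  have hb0 : 0 < b := by rw [hb_def]; linarith
  have hbn : b < n := by rw [hb_def]; linarith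
  have hab : (n : ℝ) < a + b := by rw [ha_def, hb_def]; linarith
  -- the base point
  set e₀ : EuclideanSpace ℝ (Fin n) := EuclideanSpace.single ⟨0, hn⟩ (1:ℝ) with he₀_def
  have he₀ : ‖e₀‖ = 1 := by
    rw [he₀_def, EuclideanSpace.norm_single, norm_one]
  have he₀0 : e₀ ≠ 0 := by
    intro h
    rw [h, norm_zero] at he₀
    norm_num at he₀
  -- the constant K
  set K : ℝ := ∫ z : EuclideanSpace ℝ (Fin n), ‖e₀ - z‖ ^ (-a) * ‖z‖ ^ (-b) with hK_def
  have hKint : Integrable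
      (fun z : EuclideanSpace ℝ (Fin n) => ‖e₀ - z‖ ^ (-a) * ‖z‖ ^ (-b)) :=
    sps_int hn ha0 han hb0 hbn hab he₀0
  haveI : Nontrivial (EuclideanSpace ℝ (Fin n)) := ⟨e₀, 0, he₀0⟩
  have hK : 0 < K := by
    rw [hK_def, integral_pos_iff_support_of_nonneg_ae
      (Eventually.of_forall fun z => by positivity) hKint]
    have hsup : ({e₀, 0} : Set (EuclideanSpace ℝ (Fin n)))ᶜ ⊆
        Function.support fun z => ‖e₀ - z‖ ^ (-a) * ‖z‖ ^ (-b) := by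
      intro z hz
      simp only [mem_compl_iff, mem_insert_iff, mem_singleton_iff, not_or] at hz
      obtain ⟨hz1, hz2⟩ := hz
      have h1 : 0 < ‖e₀ - z‖ := norm_pos_iff.2 (sub_ne_zero.mpr (Ne.symm hz1))
      have h2 : 0 < ‖z‖ := norm_pos_iff.2 hz2
      have : 0 < ‖e₀ - z‖ ^ (-a) * ‖z‖ ^ (-b) :=
        mul_pos (Real.rpow_pos_of_pos h1 _) (Real.rpow_pos_of_pos h2 _)
      exact Function.mem_support.mpr (ne_of_gt this)
    refine lt_of_lt_of_le ?_ (measure_mono hsup)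
    have hfin : volume ({e₀, 0} : Set (EuclideanSpace ℝ (Fin n))) = 0 :=
      ((Set.finite_singleton (0 : EuclideanSpace ℝ (Fin n))).insert e₀).measure_zero _
    rw [measure_compl (((Set.finite_singleton (0 : EuclideanSpace ℝ (Fin n))).insert
      e₀).measurableSet) (by rw [hfin]; exact ENNReal.zero_ne_top),
      measure_univ_of_isAddLeftInvariant, hfin]
    simp
  -- the scaling identity
  have hI : ∀ x : EuclideanSpace ℝ (Fin n), x ≠ 0 →
      (∫ y : EuclideanSpace ℝ (Fin n), ‖x - y‖ ^ (-a) * ‖y‖ ^ (-b))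
        = ‖x‖ ^ (-(a / 2)) * K := by
    intro x hx
    have hr : 0 < ‖x‖ := norm_pos_iff.2 hx
    set r : ℝ := ‖x‖ with hr_def
    set T : EuclideanSpace ℝ (Fin n) ≃ₗᵢ[ℝ] EuclideanSpace ℝ (Fin n) :=
      Submodule.reflection (ℝ ∙ (e₀ - r⁻¹ • x))ᗮ with hT_def
    have hT : T e₀ = r⁻¹ • x := by
      refine Submodule.reflection_sub ?_
      rw [he₀, norm_smul, norm_inv, Real.norm_eq_abs, abs_of_pos hr, ← hr_def,
        inv_mul_cancel₀ hr.ne']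
    have hTx : r • T e₀ = x := by
      rw [hT, smul_smul, mul_inv_cancel₀ hr.ne', one_smul]
    have h1 := Measure.integral_comp_smul_of_nonneg (μ := volume)
      (fun y : EuclideanSpace ℝ (Fin n) => ‖x - y‖ ^ (-a) * ‖y‖ ^ (-b)) r (hR := hr.le)
    rw [finrank_euclideanSpace_fin] at h1
    have h2 : (∫ z : EuclideanSpace ℝ (Fin n), ‖x - r • T z‖ ^ (-a) * ‖r • T z‖ ^ (-b))
        = ∫ w : EuclideanSpace ℝ (Fin n), ‖x - r • w‖ ^ (-a) * ‖r • w‖ ^ (-b) :=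
      MeasureTheory.integral_comp T (fun w : EuclideanSpace ℝ (Fin n) => ‖x - r • w‖ ^ (-a) * ‖r • w‖ ^ (-b))
    have h3 : ∀ z : EuclideanSpace ℝ (Fin n),
        ‖x - r • T z‖ ^ (-a) * ‖r • T z‖ ^ (-b)
          = r ^ (-(a + b)) * (‖e₀ - z‖ ^ (-a) * ‖z‖ ^ (-b)) := by
      intro z
      have hxz : x - r • T z = r • T (e₀ - z) := by
        rw [← hTx, map_sub, smul_sub]
      have hn1 : ‖x - r • T z‖ = r * ‖e₀ - z‖ := by
        rw [hxz, norm_smul, Real.norm_eq_abs, abs_of_pos hr, T.norm_map]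
      have hn2 : ‖r • T z‖ = r * ‖z‖ := by
        rw [norm_smul, Real.norm_eq_abs, abs_of_pos hr, T.norm_map]
      rw [hn1, hn2, Real.mul_rpow hr.le (norm_nonneg _), Real.mul_rpow hr.le (norm_nonneg _),
        neg_add, Real.rpow_add hr]
      ring
    calc (∫ y : EuclideanSpace ℝ (Fin n), ‖x - y‖ ^ (-a) * ‖y‖ ^ (-b))
        = (r ^ n : ℝ) • ((r ^ n : ℝ)⁻¹ •
            ∫ y : EuclideanSpace ℝ (Fin n), ‖x - y‖ ^ (-a) * ‖y‖ ^ (-b)) := by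
          rw [smul_inv_smul₀ (pow_ne_zero _ hr.ne')]
      _ = (r ^ n : ℝ) • ∫ z : EuclideanSpace ℝ (Fin n),
            ‖x - r • z‖ ^ (-a) * ‖r • z‖ ^ (-b) := by rw [← h1]
      _ = (r ^ n : ℝ) • ∫ z : EuclideanSpace ℝ (Fin n),
            ‖x - r • T z‖ ^ (-a) * ‖r • T z‖ ^ (-b) := by rw [h2]
      _ = (r ^ n : ℝ) • ∫ z : EuclideanSpace ℝ (Fin n),
            r ^ (-(a + b)) * (‖e₀ - z‖ ^ (-a) * ‖z‖ ^ (-b)) := by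
          congr 1
          exact integral_congr_ae (Eventually.of_forall h3)
      _ = (r ^ n : ℝ) * (r ^ (-(a + b)) * K) := by
          rw [integral_const_mul, smul_eq_mul, hK_def]
      _ = r ^ (-(a / 2)) * K := by
          rw [← Real.rpow_natCast r n, ← mul_assoc, ← Real.rpow_add hr]
          congr 2
          rw [ha_def, hb_def]
          ring
  -- choose the constant c
  set c : ℝ := K ^ (-(a / (2 * α))) with hc_def
  have hc : 0 < c := Real.rpow_pos_of_pos hK _
  refine ⟨c, hc, fun x hx => ?_⟩
  have hintg : ∀ y : EuclideanSpace ℝ (Fin n),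
      ‖x - y‖ ^ (-a) * (c * ‖y‖ ^ (-(a / 2))) ^ p
        = c ^ p * (‖x - y‖ ^ (-a) * ‖y‖ ^ (-b)) := by
    intro y
    rw [Real.mul_rpow hc.le (Real.rpow_nonneg (norm_nonneg y) _),
      ← Real.rpow_mul (norm_nonneg y)]
    have hexp : (-(a / 2)) * p = -b := by
      rw [hp_def, hb_def]
      field_simp
    rw [hexp]
    ring
  have hcK : c ^ p * K = c := by
    rw [hc_def]
    have h1 : ((K ^ (-(a / (2 * α)))) ^ p) * K
        = K ^ ((-(a / (2 * α))) * p) * K ^ (1:ℝ) := by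
      rw [← Real.rpow_mul hK.le, Real.rpow_one]
    rw [h1, ← Real.rpow_add hK]
    congr 1
    rw [hp_def, ha_def]
    have hna : (n:ℝ) - α ≠ 0 := by linarith
    field_simp
    ring
  calc c * ‖x‖ ^ (-(a / 2))
      = (c ^ p * K) * ‖x‖ ^ (-(a / 2)) := by rw [hcK]
    _ = c ^ p * (‖x‖ ^ (-(a / 2)) * K) := by ring
    _ = c ^ p * ∫ y : EuclideanSpace ℝ (Fin n), ‖x - y‖ ^ (-a) * ‖y‖ ^ (-b) := by
        rw [hI x hx]
    _ = ∫ y : EuclideanSpace ℝ (Fin n),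
          c ^ p * (‖x - y‖ ^ (-a) * ‖y‖ ^ (-b)) := by rw [integral_const_mul]
    _ = ∫ y : EuclideanSpace ℝ (Fin n),
          ‖x - y‖ ^ (-a) * (c * ‖y‖ ^ (-(a / 2))) ^ p := by
        exact integral_congr_ae (Eventually.of_forall fun y => (hintg y).symm)
end

section
/- Let n be a positive integer and 0 < α < n. Suppose u is a positive function on ℝⁿ \ {0}, radially symmetric about the origin and monotone decreasing in |x| (write u(r) for its value at radius r), satisfying u(x) = ∫_{ℝⁿ} |x−y|^{−(n−α)} u(y)^{(n+α)/(n−α)} dy for all x ≠ 0. Then there is a constant C > 0, depending only on n and α, such that for all r > 0, u(r) ≥ C r^{α} u(r)^{(n+α)/(n−α)}; equivalently u(r)^{2α/(n−α)} ≤ (C r^{α})^{−1}. -/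
open MeasureTheory Metric

/-- For a radially symmetric, monotone decreasing singular solution of the
critical integral equation, one has `u(r) ≥ C r^α u(r)^{(n+α)/(n-α)}` with a
constant `C > 0` depending only on `n` and `α`. -/
theorem radial_solution_lower_bound
    (n : ℕ) (hn : 0 < n) (α : ℝ) (hα0 : 0 < α) (hαn : α < n) :
    ∃ C > (0 : ℝ),
      ∀ (u : EuclideanSpace ℝ (Fin n) → ℝ) (f : ℝ → ℝ),
        (∀ x ≠ (0 : EuclideanSpace ℝ (Fin n)), 0 < u x) →
        (∀ x ≠ (0 : EuclideanSpace ℝ (Fin n)), u x = f ‖x‖) →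
        (∀ r₁ r₂ : ℝ, 0 < r₁ → r₁ ≤ r₂ → f r₂ ≤ f r₁) →
        (∀ x ≠ (0 : EuclideanSpace ℝ (Fin n)),
          u x = ∫ y : EuclideanSpace ℝ (Fin n),
            ‖x - y‖ ^ (-((n : ℝ) - α)) *
              u y ^ (((n : ℝ) + α) / ((n : ℝ) - α))) →
        ∀ r > (0 : ℝ),
          C * r ^ α * f r ^ (((n : ℝ) + α) / ((n : ℝ) - α)) ≤ f r ∧
          f r ^ (2 * α / ((n : ℝ) - α)) ≤ (C * r ^ α)⁻¹ := by
  haveI : Nontrivial (EuclideanSpace ℝ (Fin n)) :=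
    Module.nontrivial_of_finrank_pos (R := ℝ) (by
      rw [finrank_euclideanSpace_fin]; exact hn)
  have hnα : (0:ℝ) < (n:ℝ) - α := by linarith
  set E := EuclideanSpace ℝ (Fin n)
  set ω := (volume (ball (0 : E) 1)).toReal with hωdef
  have hωpos : 0 < ω := by
    apply ENNReal.toReal_pos
    · exact (measure_ball_pos volume _ one_pos).ne'
    · exact (measure_ball_lt_top).ne
  set p := ((n : ℝ) + α) / ((n : ℝ) - α) with hpdef
  have hp : 0 < p := by positivity
  set C := (2:ℝ) ^ (-((n:ℝ) - α)) * ω with hCdef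
  have hCpos : 0 < C := by positivity
  refine ⟨C, hCpos, ?_⟩
  intro u f hupos hrad hmono heq r hr
  -- pick a point of norm r
  set x : E := r • EuclideanSpace.single (⟨0, hn⟩ : Fin n) (1:ℝ) with hxdef
  have hxnorm : ‖x‖ = r := by
    rw [hxdef, norm_smul, EuclideanSpace.norm_single]
    simp [abs_of_pos hr]
  have hxne : x ≠ 0 := by
    intro h; rw [h, norm_zero] at hxnorm; exact hr.ne' hxnorm.symm
  have hfr : f r = u x := by rw [hrad x hxne, hxnorm]
  have hfrpos : 0 < f r := hfr ▸ hupos x hxne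
  set g : E → ℝ := fun y => ‖x - y‖ ^ (-((n:ℝ) - α)) * u y ^ p with hgdef
  have hux : u x = ∫ y, g y := heq x hxne
  have hint : Integrable g := by
    by_contra h
    rw [integral_undef h] at hux
    exact (hfrpos.ne' (hfr.trans hux))
  have h00 : ∀ᵐ y : E, y ≠ 0 := ae_iff.2 (by simp)
  have hg0 : ∀ᵐ y : E, 0 ≤ g y := by
    filter_upwards [h00] with y hy
    have := hupos y hy
    positivity
  set S := closedBall (0 : E) r with hSdef
  have hSmeas : MeasurableSet S := measurableSet_closedBall
  set c : ℝ := (2*r) ^ (-((n:ℝ) - α)) * f r ^ p with hcdef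
  have hSvol : volume S = ENNReal.ofReal (r ^ n) * volume (ball (0:E) 1) := by
    rw [hSdef, Measure.addHaar_closedBall volume (0:E) hr.le, finrank_euclideanSpace_fin]
  have hSfin : volume S < ⊤ := by
    rw [hSvol]
    exact ENNReal.mul_lt_top ENNReal.ofReal_lt_top measure_ball_lt_top
  -- a.e. pointwise lower bound on S
  have haeS : ∀ᵐ y : E, y ∈ S → c ≤ g y := by
    have h0 : ∀ᵐ y : E, y ≠ 0 := h00
    have hx0 : ∀ᵐ y : E, y ≠ x := ae_iff.2 (by simp)
    filter_upwards [h0, hx0] with y hy0 hyx hyS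
    have hynorm : ‖y‖ ≤ r := by simpa [hSdef] using hyS
    have hypos : 0 < ‖y‖ := norm_pos_iff.2 hy0
    have h1 : (2*r) ^ (-((n:ℝ) - α)) ≤ ‖x - y‖ ^ (-((n:ℝ) - α)) := by
      apply Real.rpow_le_rpow_of_nonpos
      · rw [norm_pos_iff]; exact sub_ne_zero.2 fun h => hyx h.symm
      · calc ‖x - y‖ ≤ ‖x‖ + ‖y‖ := norm_sub_le x y
          _ ≤ r + r := by rw [hxnorm]; linarith
          _ = 2 * r := by ring
      · linarith
    have h2 : f r ^ p ≤ u y ^ p := by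
      apply Real.rpow_le_rpow hfrpos.le _ hp.le
      rw [hrad y hy0]
      exact hmono ‖y‖ r hypos hynorm
    have h3 : (0:ℝ) ≤ f r ^ p := Real.rpow_nonneg hfrpos.le p
    have h4 : (0:ℝ) ≤ ‖x - y‖ ^ (-((n:ℝ) - α)) := Real.rpow_nonneg (norm_nonneg _) _
    exact mul_le_mul h1 h2 h3 h4
  have hconst_int : IntegrableOn (fun _ : E => c) S := by
    exact integrableOn_const hSfin.ne
  have step1 : ∫ y in S, c ≤ ∫ y in S, g y :=
    setIntegral_mono_on_ae hconst_int (hint.integrableOn) hSmeas haeS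
  have step2 : ∫ y in S, g y ≤ ∫ y, g y := setIntegral_le_integral hint hg0
  have hconstval : ∫ _ in S, c = (r ^ n * ω) * c := by
    rw [setIntegral_const, measureReal_def, hSvol, ENNReal.toReal_mul, ENNReal.toReal_ofReal (by positivity),
      smul_eq_mul, hωdef]
  have key : (r ^ n * ω) * c ≤ f r := by
    rw [← hconstval, hfr, hux]
    exact step1.trans step2
  -- rewrite (r^n * ω) * c = C * r^α * f r ^ p
  have hrw : (r ^ n * ω) * c = C * r ^ α * f r ^ p := by
    rw [hcdef, hCdef]
    have h2r : (2*r) ^ (-((n:ℝ) - α)) = (2:ℝ) ^ (-((n:ℝ) - α)) * r ^ (-((n:ℝ) - α)) :=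
      Real.mul_rpow (by norm_num) hr.le
    have hrn : (r:ℝ) ^ n = r ^ ((n:ℝ)) := (Real.rpow_natCast r n).symm
    rw [h2r, hrn]
    have : r ^ ((n:ℝ)) * r ^ (-((n:ℝ) - α)) = r ^ α := by
      rw [← Real.rpow_add hr]; ring_nf
    rw [← this]; ring
  rw [hrw] at key
  have hCr : 0 < C * r ^ α := by positivity
  refine ⟨key, ?_⟩
  set q := 2 * α / ((n:ℝ) - α) with hqdef
  have hpq : p = 1 + q := by
    rw [hpdef, hqdef]; field_simp; ring
  have hsplit : f r ^ p = f r * f r ^ q := by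
    rw [hpq, Real.rpow_add hfrpos, Real.rpow_one]
  have key2 : C * r ^ α * f r ^ q ≤ 1 := by
    rw [hsplit] at key
    have := (mul_le_mul_iff_of_pos_right hfrpos).1 (by linarith [key] : (C * r ^ α * f r ^ q) * f r ≤ 1 * f r)
    linarith
  calc f r ^ q = (C * r ^ α)⁻¹ * (C * r ^ α * f r ^ q) := by
        field_simp
    _ ≤ (C * r ^ α)⁻¹ * 1 := by
        apply mul_le_mul_of_nonneg_left key2 (by positivity)
    _ = (C * r ^ α)⁻¹ := mul_one _
end

section
/- Let n be a positive integer and 0 < α < n. Then there exists a constant c = c(n, α) > 0 such that for every t > 0 and every x₀ ∈ ℝⁿ, the function u(x) = c (t/(t² + |x − x₀|²))^{(n−α)/2} satisfies the critical integral equation u(x) = ∫_{ℝⁿ} |x−y|^{−(n−α)} u(y)^{(n+α)/(n−α)} dy for all x ∈ ℝⁿ. -/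
open MeasureTheory

section BubbleAux

open Real Set Filter
open scoped ENNReal

/-! ### One-dimensional helper lemmas -/

private lemma lint_scale (f : ℝ → ℝ≥0∞) (hf : Measurable f) {c : ℝ} (hc : 0 < c) :
    ∫⁻ s in Ioi (0:ℝ), f s = ENNReal.ofReal c * ∫⁻ u in Ioi (0:ℝ), f (c * u) := by
  have hind : ∀ u : ℝ, (Ioi (0:ℝ)).indicator f (c * u)
      = (Ioi (0:ℝ)).indicator (fun u => f (c * u)) u := by
    intro u
    by_cases hu : u ∈ Ioi (0:ℝ)
    · rw [indicator_of_mem hu, indicator_of_mem (by exact mul_pos hc hu)]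
    · rw [indicator_of_notMem hu, indicator_of_notMem]
      simp only [mem_Ioi, not_lt] at hu ⊢
      exact mul_nonpos_of_nonneg_of_nonpos hc.le hu
  have h1 : ∫⁻ u in Ioi (0:ℝ), f (c * u) = ∫⁻ u, (Ioi (0:ℝ)).indicator f (c * u) := by
    rw [← lintegral_indicator measurableSet_Ioi]
    exact lintegral_congr fun u => (hind u).symm
  have h2 : ∫⁻ u, (Ioi (0:ℝ)).indicator f (c * u)
      = ∫⁻ s, (Ioi (0:ℝ)).indicator f s ∂(Measure.map (fun u => c * u) volume) := by
    rw [lintegral_map (hf.indicator measurableSet_Ioi) (measurable_const_mul c)]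
  rw [h1, h2, Real.map_volume_mul_left (ne_of_gt hc), lintegral_smul_measure,
    lintegral_indicator measurableSet_Ioi, smul_eq_mul, ← mul_assoc, ← ENNReal.ofReal_mul hc.le,
    abs_of_pos (inv_pos.mpr hc), mul_inv_cancel₀ (ne_of_gt hc)]
  simp

private lemma integrableOn_gammalike {a c : ℝ} (ha : 0 < a) (hc : 0 < c) :
    IntegrableOn (fun s : ℝ => s ^ (a - 1) * rexp (-(c * s))) (Ioi 0) := by
  have := integrableOn_rpow_mul_exp_neg_mul_rpow (s := a - 1) (p := 1) (b := c)
    (by linarith) one_pos hc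
  refine this.congr_fun (fun s hs => ?_) measurableSet_Ioi
  simp only [Real.rpow_one, neg_mul]

private lemma lint_gamma {a c : ℝ} (ha : 0 < a) (hc : 0 < c) :
    ∫⁻ s in Ioi (0:ℝ), ENNReal.ofReal (s ^ (a - 1) * rexp (-(c * s)))
      = ENNReal.ofReal ((1 / c) ^ a * Real.Gamma a) := by
  rw [← Real.integral_rpow_mul_exp_neg_mul_Ioi ha hc,
    ← ofReal_integral_eq_lintegral_ofReal (integrableOn_gammalike ha hc)]
  filter_upwards [self_mem_ae_restrict (measurableSet_Ioi : MeasurableSet (Ioi (0:ℝ)))]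
    with s hs
  have : (0:ℝ) < s := hs
  positivity

/-! ### Gaussian integrals on Euclidean space -/

private lemma integrable_gauss {n : ℕ} {b : ℝ} (hb : 0 < b) :
    Integrable (fun y : EuclideanSpace ℝ (Fin n) => rexp (-(b * ‖y‖ ^ 2))) := by
  have h := (GaussianFourier.integrable_cexp_neg_mul_sq_norm_add
    (V := EuclideanSpace ℝ (Fin n)) (b := (b:ℂ)) (by simpa using hb) 0 0).norm
  refine h.congr (Eventually.of_forall fun y => ?_)
  simp only [Complex.norm_exp]
  norm_num
  left
  norm_cast

private lemma integral_gauss {n : ℕ} {b : ℝ} (hb : 0 < b) :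
    ∫ y : EuclideanSpace ℝ (Fin n), rexp (-(b * ‖y‖ ^ 2)) = (π / b) ^ ((n:ℝ) / 2) := by
  have := GaussianFourier.integral_rexp_neg_mul_sq_norm (V := EuclideanSpace ℝ (Fin n)) hb
  simp only [neg_mul] at this ⊢
  rw [this, finrank_euclideanSpace_fin]

private lemma lint_gauss {n : ℕ} {b : ℝ} (hb : 0 < b) (m : EuclideanSpace ℝ (Fin n)) :
    ∫⁻ y : EuclideanSpace ℝ (Fin n), ENNReal.ofReal (rexp (-(b * ‖y - m‖ ^ 2)))
      = ENNReal.ofReal ((π / b) ^ ((n:ℝ) / 2)) := by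
  have htr : ∫⁻ y : EuclideanSpace ℝ (Fin n), ENNReal.ofReal (rexp (-(b * ‖y - m‖ ^ 2)))
      = ∫⁻ y : EuclideanSpace ℝ (Fin n), ENNReal.ofReal (rexp (-(b * ‖y‖ ^ 2))) := by
    simpa [sub_eq_add_neg] using
      lintegral_add_right_eq_self
        (fun y : EuclideanSpace ℝ (Fin n) => ENNReal.ofReal (rexp (-(b * ‖y‖ ^ 2)))) (-m)
  rw [htr, ← integral_gauss hb,
    ← ofReal_integral_eq_lintegral_ofReal (integrable_gauss hb)
      (Eventually.of_forall fun y => (exp_pos _).le)]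

/-! ### Completing the square -/

private lemma complete_square {n : ℕ} {s r : ℝ} (hs : 0 < s) (hr : 0 < r)
    (x y : EuclideanSpace ℝ (Fin n)) :
    s * ‖x - y‖ ^ 2 + r * ‖y‖ ^ 2
      = (s + r) * ‖y - (s / (s + r)) • x‖ ^ 2 + s * r / (s + r) * ‖x‖ ^ 2 := by
  have hsr : s + r ≠ 0 := by positivity
  have h1 : ‖x - y‖ ^ 2 = ‖x‖ ^ 2 - 2 * inner ℝ x y + ‖y‖ ^ 2 := norm_sub_sq_real x y
  have h2 : ‖y - (s / (s + r)) • x‖ ^ 2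
      = ‖y‖ ^ 2 - 2 * inner ℝ y ((s / (s + r)) • x) + ‖(s / (s + r)) • x‖ ^ 2 :=
    norm_sub_sq_real _ _
  rw [h1, h2, real_inner_smul_right, norm_smul, real_inner_comm y x]
  rw [mul_pow, Real.norm_eq_abs, sq_abs]
  field_simp
  ring

private lemma step_C {n : ℕ} {a b s r : ℝ} (hs : 0 < s) (hr : 0 < r)
    (x : EuclideanSpace ℝ (Fin n)) :
    ∫⁻ y : EuclideanSpace ℝ (Fin n),
        ENNReal.ofReal ((s ^ (a-1) * rexp (-(s * ‖x - y‖ ^ 2)))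
          * (r ^ (b-1) * rexp (-(r * (1 + ‖y‖ ^ 2)))))
      = ENNReal.ofReal (s ^ (a-1) * r ^ (b-1) * rexp (-r)
          * rexp (-(s * r / (s + r) * ‖x‖ ^ 2)) * (π / (s + r)) ^ ((n:ℝ) / 2)) := by
  have hsr : (0:ℝ) < s + r := by linarith
  have key : ∀ y : EuclideanSpace ℝ (Fin n),
      (s ^ (a-1) * rexp (-(s * ‖x - y‖ ^ 2))) * (r ^ (b-1) * rexp (-(r * (1 + ‖y‖ ^ 2))))
      = (s ^ (a-1) * r ^ (b-1) * rexp (-r) * rexp (-(s * r / (s + r) * ‖x‖ ^ 2)))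
          * rexp (-((s + r) * ‖y - (s / (s + r)) • x‖ ^ 2)) := by
    intro y
    have hexp : rexp (-(s * ‖x - y‖ ^ 2)) * rexp (-(r * (1 + ‖y‖ ^ 2)))
        = (rexp (-r) * rexp (-(s * r / (s + r) * ‖x‖ ^ 2)))
          * rexp (-((s + r) * ‖y - (s / (s + r)) • x‖ ^ 2)) := by
      rw [← Real.exp_add, ← Real.exp_add, ← Real.exp_add]
      congr 1
      linear_combination (-1 : ℝ) * complete_square (n := n) hs hr x y
    calc (s ^ (a-1) * rexp (-(s * ‖x - y‖ ^ 2))) * (r ^ (b-1) * rexp (-(r * (1 + ‖y‖ ^ 2))))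
        = (s ^ (a-1) * r ^ (b-1))
            * (rexp (-(s * ‖x - y‖ ^ 2)) * rexp (-(r * (1 + ‖y‖ ^ 2)))) := by ring
      _ = _ := by rw [hexp]; ring
  calc ∫⁻ y : EuclideanSpace ℝ (Fin n),
        ENNReal.ofReal ((s ^ (a-1) * rexp (-(s * ‖x - y‖ ^ 2)))
          * (r ^ (b-1) * rexp (-(r * (1 + ‖y‖ ^ 2)))))
      = ∫⁻ y : EuclideanSpace ℝ (Fin n),
          ENNReal.ofReal (s ^ (a-1) * r ^ (b-1) * rexp (-r)
            * rexp (-(s * r / (s + r) * ‖x‖ ^ 2)))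
          * ENNReal.ofReal (rexp (-((s + r) * ‖y - (s / (s + r)) • x‖ ^ 2))) := by
        refine lintegral_congr fun y => ?_
        rw [← ENNReal.ofReal_mul (by positivity), key y]
    _ = ENNReal.ofReal (s ^ (a-1) * r ^ (b-1) * rexp (-r)
            * rexp (-(s * r / (s + r) * ‖x‖ ^ 2)))
          * ENNReal.ofReal ((π / (s + r)) ^ ((n:ℝ) / 2)) := by
        rw [lintegral_const_mul' _ _ ENNReal.ofReal_ne_top, lint_gauss hsr]
    _ = _ := by
        rw [← ENNReal.ofReal_mul (by positivity)]

/-! ### Auxiliary integrands -/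

private noncomputable def Gf {n : ℕ} (a b : ℝ) (x y : EuclideanSpace ℝ (Fin n))
    (s r : ℝ) : ℝ≥0∞ :=
  ENNReal.ofReal ((s ^ (a-1) * rexp (-(s * ‖x - y‖ ^ 2)))
    * (r ^ (b-1) * rexp (-(r * (1 + ‖y‖ ^ 2)))))

private noncomputable def Phi (n : ℕ) (a b X : ℝ) (s r : ℝ) : ℝ≥0∞ :=
  ENNReal.ofReal (s ^ (a-1) * r ^ (b-1) * rexp (-r) * rexp (-(s * r / (s + r) * X))
    * (π / (s + r)) ^ ((n:ℝ)/2))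

private noncomputable def Psi (n : ℕ) (b X : ℝ) (s u : ℝ) : ℝ≥0∞ :=
  ENNReal.ofReal (π ^ ((n:ℝ)/2) * (u ^ (b-1) * (1+u) ^ (-((n:ℝ)/2)))
    * (s ^ ((n:ℝ)/2-1) * rexp (-((u*(1+u+X)/(1+u))*s))))

private noncomputable def Kc (n : ℕ) (b : ℝ) : ℝ≥0∞ :=
  ∫⁻ v in Ioi (0:ℝ), ENNReal.ofReal (v ^ (b-(n:ℝ)/2-1) * (1+v) ^ (-((n:ℝ)/2)))

/-! ### Subordination identity -/

private lemma step1 {n : ℕ} {a b : ℝ} (ha : 0 < a) (hb : 0 < b)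
    (x y : EuclideanSpace ℝ (Fin n)) (hxy : y ≠ x) :
    ENNReal.ofReal (‖x - y‖ ^ (-(2*a)) * (1 + ‖y‖^2) ^ (-b))
      = (ENNReal.ofReal (Real.Gamma a * Real.Gamma b))⁻¹
          * ∫⁻ s in Ioi (0:ℝ), ∫⁻ r in Ioi (0:ℝ), Gf a b x y s r := by
  have hc1 : (0:ℝ) < ‖x - y‖ ^ 2 := by
    have h0 : (0:ℝ) < ‖x - y‖ := norm_pos_iff.mpr (sub_ne_zero.mpr (Ne.symm hxy))
    positivity
  have hc2 : (0:ℝ) < 1 + ‖y‖ ^ 2 := by positivity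
  have hinner : ∫⁻ s in Ioi (0:ℝ), ∫⁻ r in Ioi (0:ℝ), Gf a b x y s r
      = ENNReal.ofReal ((1 / ‖x - y‖^2) ^ a * Real.Gamma a)
        * ENNReal.ofReal ((1 / (1 + ‖y‖^2)) ^ b * Real.Gamma b) := by
    have hin : ∀ s ∈ Ioi (0:ℝ), (∫⁻ r in Ioi (0:ℝ), Gf a b x y s r)
        = ENNReal.ofReal (s ^ (a-1) * rexp (-(‖x - y‖^2 * s)))
          * ENNReal.ofReal ((1 / (1 + ‖y‖^2)) ^ b * Real.Gamma b) := by
      intro s hs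
      have hs' : (0:ℝ) < s := hs
      have : ∀ r : ℝ, Gf a b x y s r
          = ENNReal.ofReal (s ^ (a-1) * rexp (-(‖x - y‖^2 * s)))
            * ENNReal.ofReal (r ^ (b-1) * rexp (-((1 + ‖y‖^2) * r))) := by
        intro r
        unfold Gf
        rw [← ENNReal.ofReal_mul (by positivity)]
        ring_nf
      rw [lintegral_congr this, lintegral_const_mul' _ _ ENNReal.ofReal_ne_top,
        lint_gamma hb hc2]
    rw [setLIntegral_congr_fun measurableSet_Ioi hin,
      lintegral_mul_const' _ _ ENNReal.ofReal_ne_top, lint_gamma ha hc1]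
  rw [hinner]
  have hGa : (0:ℝ) < Real.Gamma a := Real.Gamma_pos_of_pos ha
  have hGb : (0:ℝ) < Real.Gamma b := Real.Gamma_pos_of_pos hb
  rw [← ENNReal.ofReal_mul (by positivity)]
  have hre : (1 / ‖x - y‖^2) ^ a * Real.Gamma a * ((1 / (1 + ‖y‖^2)) ^ b * Real.Gamma b)
      = (Real.Gamma a * Real.Gamma b) * (‖x - y‖ ^ (-(2*a)) * (1 + ‖y‖^2) ^ (-b)) := by
    have h1 : (1 / ‖x - y‖^2) ^ a = ‖x - y‖ ^ (-(2*a)) := by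
      rw [one_div, ← Real.rpow_neg_one, ← Real.rpow_natCast (‖x - y‖) 2,
        ← Real.rpow_mul (norm_nonneg _), ← Real.rpow_mul (by positivity)]
      norm_num
    have h2 : (1 / (1 + ‖y‖^2)) ^ b = (1 + ‖y‖^2) ^ (-b) := by
      rw [one_div, ← Real.rpow_neg_one, ← Real.rpow_mul hc2.le]
      norm_num
    rw [h1, h2]; ring
  calc ENNReal.ofReal (‖x - y‖ ^ (-(2*a)) * (1 + ‖y‖^2) ^ (-b))
      = (ENNReal.ofReal (Real.Gamma a * Real.Gamma b))⁻¹
          * (ENNReal.ofReal (Real.Gamma a * Real.Gamma b)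
            * ENNReal.ofReal (‖x - y‖ ^ (-(2*a)) * (1 + ‖y‖^2) ^ (-b))) := by
        rw [← mul_assoc, ENNReal.inv_mul_cancel
          (by simp only [ne_eq, ENNReal.ofReal_eq_zero, not_le]; positivity)
          ENNReal.ofReal_ne_top, one_mul]
    _ = _ := by
        rw [← ENNReal.ofReal_mul (by positivity), ← hre,
          ENNReal.ofReal_mul (by positivity)]

/-! ### Real-variable rpow identities -/

private lemma real_id1 {n : ℕ} {a b s u X : ℝ} (hab : a + b = n) (hs : 0 < s) (hu : 0 < u)
    (hX : 0 ≤ X) :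
    s * (s ^ (a-1) * (s*u) ^ (b-1) * rexp (-(s*u)) * rexp (-(s*(s*u)/(s+s*u)*X))
        * (π/(s+s*u)) ^ ((n:ℝ)/2))
      = π ^ ((n:ℝ)/2) * (u ^ (b-1) * (1+u) ^ (-((n:ℝ)/2)))
        * (s ^ ((n:ℝ)/2-1) * rexp (-((u*(1+u+X)/(1+u))*s))) := by
  have h1u : (0:ℝ) < 1 + u := by linarith
  have hss : s + s*u = s*(1+u) := by ring
  have hexp : rexp (-(s*u)) * rexp (-(s*(s*u)/(s+s*u)*X))
      = rexp (-((u*(1+u+X)/(1+u))*s)) := by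
    rw [← Real.exp_add]
    congr 1
    rw [hss]
    field_simp
    ring
  have hpow : (π/(s+s*u)) ^ ((n:ℝ)/2)
      = π ^ ((n:ℝ)/2) * (1+u) ^ (-((n:ℝ)/2)) * s ^ (-((n:ℝ)/2)) := by
    rw [hss, show π/(s*(1+u)) = π * (1+u)⁻¹ * s⁻¹ by rw [div_eq_mul_inv, mul_inv]; ring,
      Real.mul_rpow (by positivity) (by positivity),
      Real.mul_rpow pi_nonneg (by positivity),
      Real.inv_rpow h1u.le, Real.inv_rpow hs.le,
      ← Real.rpow_neg h1u.le, ← Real.rpow_neg hs.le]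
  have hsu : (s*u) ^ (b-1) = s ^ (b-1) * u ^ (b-1) := Real.mul_rpow hs.le hu.le
  have hsp : s ^ (a-1) * s ^ (b-1) * s ^ (-((n:ℝ)/2)) = s ^ ((n:ℝ)/2-2) := by
    rw [← Real.rpow_add hs, ← Real.rpow_add hs]
    congr 1
    linarith
  have hs1 : s * s ^ ((n:ℝ)/2-2) = s ^ ((n:ℝ)/2-1) := by
    nth_rewrite 1 [← Real.rpow_one s]
    rw [← Real.rpow_add hs]
    congr 1
    ring
  calc s * (s ^ (a-1) * (s*u) ^ (b-1) * rexp (-(s*u)) * rexp (-(s*(s*u)/(s+s*u)*X))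
        * (π/(s+s*u)) ^ ((n:ℝ)/2))
      = (s * (s ^ (a-1) * s ^ (b-1) * s ^ (-((n:ℝ)/2))))
          * (π ^ ((n:ℝ)/2) * (u ^ (b-1) * (1+u) ^ (-((n:ℝ)/2))))
          * (rexp (-(s*u)) * rexp (-(s*(s*u)/(s+s*u)*X))) := by
        rw [hsu, hpow]; ring
    _ = _ := by rw [hexp, hsp, hs1]; ring

private lemma real_id2 {n : ℕ} {b u X : ℝ} (hu : 0 < u) (hX : 0 ≤ X) :
    π ^ ((n:ℝ)/2) * (u ^ (b-1) * (1+u) ^ (-((n:ℝ)/2)))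
        * ((1/(u*(1+u+X)/(1+u))) ^ ((n:ℝ)/2) * Real.Gamma ((n:ℝ)/2))
      = π ^ ((n:ℝ)/2) * Real.Gamma ((n:ℝ)/2)
        * (u ^ (b-1-(n:ℝ)/2) * (1+u+X) ^ (-((n:ℝ)/2))) := by
  have h1u : (0:ℝ) < 1 + u := by linarith
  have h2 : (0:ℝ) < 1 + u + X := by linarith
  have hinv : (1/(u*(1+u+X)/(1+u))) ^ ((n:ℝ)/2)
      = (1+u) ^ ((n:ℝ)/2) * (u ^ (-((n:ℝ)/2)) * (1+u+X) ^ (-((n:ℝ)/2))) := by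
    rw [show 1/(u*(1+u+X)/(1+u)) = (1+u) * (u⁻¹ * (1+u+X)⁻¹) by field_simp,
      Real.mul_rpow h1u.le (by positivity), Real.mul_rpow (by positivity) (by positivity),
      Real.inv_rpow hu.le, Real.inv_rpow h2.le,
      ← Real.rpow_neg hu.le, ← Real.rpow_neg h2.le]
  have hu2 : u ^ (b-1) * u ^ (-((n:ℝ)/2)) = u ^ (b-1-(n:ℝ)/2) := by
    rw [← Real.rpow_add hu]; ring_nf
  have h1u2 : (1+u) ^ (-((n:ℝ)/2)) * (1+u) ^ ((n:ℝ)/2) = 1 := by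
    rw [← Real.rpow_add h1u]; norm_num
  calc π ^ ((n:ℝ)/2) * (u ^ (b-1) * (1+u) ^ (-((n:ℝ)/2)))
        * ((1/(u*(1+u+X)/(1+u))) ^ ((n:ℝ)/2) * Real.Gamma ((n:ℝ)/2))
      = π ^ ((n:ℝ)/2) * Real.Gamma ((n:ℝ)/2)
          * ((u ^ (b-1) * u ^ (-((n:ℝ)/2))) * (1+u+X) ^ (-((n:ℝ)/2)))
          * ((1+u) ^ (-((n:ℝ)/2)) * (1+u) ^ ((n:ℝ)/2)) := by
        rw [hinv]; ring
    _ = _ := by rw [hu2, h1u2]; ring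

private lemma real_id3 {n : ℕ} {a b v β : ℝ} (hab : a + b = n) (hv : 0 < v) (hβ : 0 < β) :
    (β*v) ^ (b-1-(n:ℝ)/2) * (β+β*v) ^ (-((n:ℝ)/2))
      = β ^ (-a-1) * (v ^ (b-(n:ℝ)/2-1) * (1+v) ^ (-((n:ℝ)/2))) := by
  have h1v : (0:ℝ) < 1 + v := by linarith
  rw [Real.mul_rpow hβ.le hv.le, show β+β*v = β*(1+v) by ring,
    Real.mul_rpow hβ.le h1v.le, show b-1-(n:ℝ)/2 = b-(n:ℝ)/2-1 by ring]
  have hββ : β ^ (b-(n:ℝ)/2-1) * β ^ (-((n:ℝ)/2)) = β ^ (-a-1) := by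
    rw [← Real.rpow_add hβ]
    congr 1
    linarith
  calc β ^ (b-(n:ℝ)/2-1) * v ^ (b-(n:ℝ)/2-1) * (β ^ (-((n:ℝ)/2)) * (1+v) ^ (-((n:ℝ)/2)))
      = (β ^ (b-(n:ℝ)/2-1) * β ^ (-((n:ℝ)/2)))
          * (v ^ (b-(n:ℝ)/2-1) * (1+v) ^ (-((n:ℝ)/2))) := by ring
    _ = _ := by rw [hββ]

/-! ### The main `lintegral` computation -/

private theorem main_lint {n : ℕ} (hn : 0 < n) {a b : ℝ} (ha : 0 < a) (hb : 0 < b)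
    (hab : a + b = n) (x : EuclideanSpace ℝ (Fin n)) :
    ∫⁻ y : EuclideanSpace ℝ (Fin n),
        ENNReal.ofReal (‖x - y‖ ^ (-(2*a)) * (1 + ‖y‖^2) ^ (-b))
      = (ENNReal.ofReal (Real.Gamma a * Real.Gamma b))⁻¹
          * (ENNReal.ofReal (π ^ ((n:ℝ)/2) * Real.Gamma ((n:ℝ)/2))
            * (ENNReal.ofReal ((1 + ‖x‖^2) ^ (-a)) * Kc n b)) := by
  haveI : Nontrivial (EuclideanSpace ℝ (Fin n)) :=
    ⟨EuclideanSpace.single ⟨0, hn⟩ (1:ℝ), 0, by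
      intro h
      have := congrArg (fun v : EuclideanSpace ℝ (Fin n) => v ⟨0, hn⟩) h
      simp [EuclideanSpace.single] at this⟩
  set X : ℝ := ‖x‖ ^ 2 with hX
  have hX0 : 0 ≤ X := by positivity
  have hβ : (0:ℝ) < 1 + X := by positivity
  have hae : ∀ᵐ y : EuclideanSpace ℝ (Fin n), y ≠ x := by
    filter_upwards [measure_eq_zero_iff_ae_notMem.mp (measure_singleton x)] with y hy
    simpa using hy
  have e1 : ∫⁻ y : EuclideanSpace ℝ (Fin n),
        ENNReal.ofReal (‖x - y‖ ^ (-(2*a)) * (1 + ‖y‖^2) ^ (-b))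
      = (ENNReal.ofReal (Real.Gamma a * Real.Gamma b))⁻¹
          * ∫⁻ y : EuclideanSpace ℝ (Fin n),
              ∫⁻ s in Ioi (0:ℝ), ∫⁻ r in Ioi (0:ℝ), Gf a b x y s r := by
    rw [← lintegral_const_mul' _ _ (by
      simp only [ne_eq, ENNReal.inv_eq_top, ENNReal.ofReal_eq_zero, not_le]
      have := Real.Gamma_pos_of_pos ha
      have := Real.Gamma_pos_of_pos hb
      positivity)]
    refine lintegral_congr_ae ?_
    filter_upwards [hae] with y hy
    exact step1 ha hb x y hy
  rw [e1]
  have swap1 : ∫⁻ y : EuclideanSpace ℝ (Fin n),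
        ∫⁻ s in Ioi (0:ℝ), ∫⁻ r in Ioi (0:ℝ), Gf a b x y s r
      = ∫⁻ s in Ioi (0:ℝ), ∫⁻ y : EuclideanSpace ℝ (Fin n),
          ∫⁻ r in Ioi (0:ℝ), Gf a b x y s r := by
    refine lintegral_lintegral_swap ?_
    exact (Measurable.lintegral_prod_right
      (f := fun (p : EuclideanSpace ℝ (Fin n) × ℝ) r => Gf a b x p.1 p.2 r)
      (by unfold Gf; fun_prop)).aemeasurable
  have swap2 : ∫⁻ s in Ioi (0:ℝ), ∫⁻ y : EuclideanSpace ℝ (Fin n),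
        ∫⁻ r in Ioi (0:ℝ), Gf a b x y s r
      = ∫⁻ s in Ioi (0:ℝ), ∫⁻ r in Ioi (0:ℝ),
          ∫⁻ y : EuclideanSpace ℝ (Fin n), Gf a b x y s r := by
    refine lintegral_congr fun s => ?_
    refine lintegral_lintegral_swap ?_
    exact (by unfold Gf; fun_prop : Measurable
      (fun p : EuclideanSpace ℝ (Fin n) × ℝ => Gf a b x p.1 s p.2)).aemeasurable
  rw [swap1, swap2]
  have e2 : ∫⁻ s in Ioi (0:ℝ), ∫⁻ r in Ioi (0:ℝ),
        ∫⁻ y : EuclideanSpace ℝ (Fin n), Gf a b x y s r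
      = ∫⁻ s in Ioi (0:ℝ), ∫⁻ r in Ioi (0:ℝ), Phi n a b X s r := by
    refine setLIntegral_congr_fun measurableSet_Ioi (fun s hs => ?_)
    refine setLIntegral_congr_fun measurableSet_Ioi (fun r hr => ?_)
    unfold Gf Phi
    exact step_C hs hr x
  rw [e2]
  have e3 : ∫⁻ s in Ioi (0:ℝ), ∫⁻ r in Ioi (0:ℝ), Phi n a b X s r
      = ∫⁻ s in Ioi (0:ℝ), ∫⁻ u in Ioi (0:ℝ), Psi n b X s u := by
    refine setLIntegral_congr_fun measurableSet_Ioi (fun s hs => ?_)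
    have hs' : (0:ℝ) < s := hs
    rw [lint_scale (fun r => Phi n a b X s r) (by unfold Phi; fun_prop) hs',
      ← lintegral_const_mul' _ _ ENNReal.ofReal_ne_top]
    refine setLIntegral_congr_fun measurableSet_Ioi (fun u hu => ?_)
    have hu' : (0:ℝ) < u := hu
    unfold Phi Psi
    rw [← ENNReal.ofReal_mul hs'.le, real_id1 hab hs' hu' hX0]
  rw [e3]
  have swap3 : ∫⁻ s in Ioi (0:ℝ), ∫⁻ u in Ioi (0:ℝ), Psi n b X s u
      = ∫⁻ u in Ioi (0:ℝ), ∫⁻ s in Ioi (0:ℝ), Psi n b X s u := by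
    refine lintegral_lintegral_swap ?_
    exact (by unfold Psi; fun_prop :
      Measurable (fun p : ℝ × ℝ => Psi n b X p.1 p.2)).aemeasurable
  rw [swap3]
  have hn2 : (0:ℝ) < (n:ℝ)/2 := by positivity
  have e4 : ∫⁻ u in Ioi (0:ℝ), ∫⁻ s in Ioi (0:ℝ), Psi n b X s u
      = ∫⁻ u in Ioi (0:ℝ), ENNReal.ofReal (π ^ ((n:ℝ)/2) * Real.Gamma ((n:ℝ)/2))
          * ENNReal.ofReal (u ^ (b-1-(n:ℝ)/2) * (1+u+X) ^ (-((n:ℝ)/2))) := by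
    refine setLIntegral_congr_fun measurableSet_Ioi (fun u hu => ?_)
    have hu' : (0:ℝ) < u := hu
    have hcu : (0:ℝ) < u*(1+u+X)/(1+u) := by positivity
    have hpt : ∀ s : ℝ, Psi n b X s u
        = ENNReal.ofReal (π ^ ((n:ℝ)/2) * (u ^ (b-1) * (1+u) ^ (-((n:ℝ)/2))))
          * ENNReal.ofReal (s ^ ((n:ℝ)/2-1) * rexp (-((u*(1+u+X)/(1+u))*s))) := by
      intro s
      unfold Psi
      rw [← ENNReal.ofReal_mul (by positivity)]
    simp only [hpt]
    rw [lintegral_const_mul' _ _ ENNReal.ofReal_ne_top, lint_gamma hn2 hcu,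
      ← ENNReal.ofReal_mul (by positivity), real_id2 hu' hX0,
      ENNReal.ofReal_mul (by positivity)]
  rw [e4, lintegral_const_mul' _ _ ENNReal.ofReal_ne_top]
  have e5 : ∫⁻ u in Ioi (0:ℝ), ENNReal.ofReal (u ^ (b-1-(n:ℝ)/2) * (1+u+X) ^ (-((n:ℝ)/2)))
      = ENNReal.ofReal ((1+X) ^ (-a)) * Kc n b := by
    rw [lint_scale _ (by fun_prop) hβ]
    have hptv : ∀ v ∈ Ioi (0:ℝ), ENNReal.ofReal
          (((1+X)*v) ^ (b-1-(n:ℝ)/2) * (1+(1+X)*v+X) ^ (-((n:ℝ)/2)))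
        = ENNReal.ofReal ((1+X) ^ (-a-1))
          * ENNReal.ofReal (v ^ (b-(n:ℝ)/2-1) * (1+v) ^ (-((n:ℝ)/2))) := by
      intro v hv
      have hv' : (0:ℝ) < v := hv
      rw [show (1:ℝ)+(1+X)*v+X = (1+X)+(1+X)*v by ring, real_id3 hab hv' hβ,
        ENNReal.ofReal_mul (by positivity)]
    rw [setLIntegral_congr_fun measurableSet_Ioi hptv,
      lintegral_const_mul' _ _ ENNReal.ofReal_ne_top, ← mul_assoc, ← Kc,
      ← ENNReal.ofReal_mul hβ.le]
    congr 2
    nth_rewrite 1 [← Real.rpow_one (1+X)]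
    rw [← Real.rpow_add hβ]
    congr 1
    ring
  rw [e5, hX]

/-! ### Properties of the constant `Kc` -/

private lemma Kc_pos (n : ℕ) (b : ℝ) : Kc n b ≠ 0 := by
  intro h0
  rw [Kc, lintegral_eq_zero_iff (by fun_prop)] at h0
  have h1 : ∀ᵐ v ∂(volume : Measure ℝ), v ∈ Ioi (0:ℝ) →
      ENNReal.ofReal (v ^ (b-(n:ℝ)/2-1) * (1+v) ^ (-((n:ℝ)/2))) = 0 :=
    (ae_restrict_iff' measurableSet_Ioi).mp h0
  have h2 : ∀ᵐ v ∂(volume : Measure ℝ), v ∉ Ioi (0:ℝ) := by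
    filter_upwards [h1] with v hv
    intro hmem
    have hv' : (0:ℝ) < v := hmem
    have := hv hmem
    rw [ENNReal.ofReal_eq_zero] at this
    have h1v : (0:ℝ) < 1 + v := by linarith
    nlinarith [Real.rpow_pos_of_pos hv' (b-(n:ℝ)/2-1), Real.rpow_pos_of_pos h1v (-((n:ℝ)/2))]
  have h3 : (volume : Measure ℝ) (Ioi (0:ℝ)) = 0 := measure_eq_zero_iff_ae_notMem.mpr h2
  rw [Real.volume_Ioi] at h3
  exact ENNReal.top_ne_zero h3

private lemma Kc_integrableOn {n : ℕ} {b : ℝ} (hn : 0 < n) (hb2 : (n:ℝ)/2 < b) (hbn : b < n) :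
    IntegrableOn (fun v : ℝ => v ^ (b-(n:ℝ)/2-1) * (1+v) ^ (-((n:ℝ)/2))) (Ioi 0) := by
  have hmeas : MeasureTheory.AEStronglyMeasurable
      (fun v : ℝ => v ^ (b-(n:ℝ)/2-1) * (1+v) ^ (-((n:ℝ)/2))) volume :=
    (by fun_prop : Measurable
      fun v : ℝ => v ^ (b-(n:ℝ)/2-1) * (1+v) ^ (-((n:ℝ)/2))).aestronglyMeasurable
  have hsplit : Ioi (0:ℝ) = Ioc (0:ℝ) 1 ∪ Ioi (1:ℝ) := by
    rw [Ioc_union_Ioi_eq_Ioi]; norm_num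
  rw [hsplit, integrableOn_union]
  constructor
  · have hbase : IntegrableOn (fun v : ℝ => v ^ (b-(n:ℝ)/2-1)) (Ioc 0 1) := by
      have := intervalIntegral.intervalIntegrable_rpow' (a := 0) (b := 1)
        (r := b-(n:ℝ)/2-1) (by linarith)
      rwa [intervalIntegrable_iff_integrableOn_Ioc_of_le (by norm_num)] at this
    refine Integrable.mono hbase hmeas.restrict ?_
    filter_upwards [self_mem_ae_restrict measurableSet_Ioc] with v hv
    obtain ⟨hv0, hv1⟩ := hv
    have h1v : (1:ℝ) ≤ 1 + v := by linarith
    rw [Real.norm_eq_abs, Real.norm_eq_abs, abs_of_nonneg (by positivity),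
      abs_of_nonneg (by positivity)]
    calc v ^ (b-(n:ℝ)/2-1) * (1+v) ^ (-((n:ℝ)/2))
        ≤ v ^ (b-(n:ℝ)/2-1) * 1 := by
          refine mul_le_mul_of_nonneg_left ?_ (by positivity)
          exact Real.rpow_le_one_of_one_le_of_nonpos h1v (neg_nonpos.mpr (by positivity))
      _ = v ^ (b-(n:ℝ)/2-1) := mul_one _
  · have hbase : IntegrableOn (fun v : ℝ => v ^ (b-(n:ℝ)-1)) (Ioi 1) :=
      integrableOn_Ioi_rpow_of_lt (by linarith) one_pos
    refine Integrable.mono hbase hmeas.restrict ?_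
    filter_upwards [self_mem_ae_restrict measurableSet_Ioi] with v hv
    have hv1 : (1:ℝ) < v := hv
    have hv0 : (0:ℝ) < v := by linarith
    rw [Real.norm_eq_abs, Real.norm_eq_abs, abs_of_nonneg (by positivity),
      abs_of_nonneg (by positivity)]
    calc v ^ (b-(n:ℝ)/2-1) * (1+v) ^ (-((n:ℝ)/2))
        ≤ v ^ (b-(n:ℝ)/2-1) * v ^ (-((n:ℝ)/2)) := by
          refine mul_le_mul_of_nonneg_left ?_ (by positivity)
          exact Real.rpow_le_rpow_of_nonpos hv0 (by linarith) (neg_nonpos.mpr (by positivity))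
      _ = v ^ (b-(n:ℝ)-1) := by
          rw [← Real.rpow_add hv0]; congr 1; ring

private lemma Kc_ne_top {n : ℕ} {b : ℝ} (hn : 0 < n) (hb2 : (n:ℝ)/2 < b) (hbn : b < n) :
    Kc n b ≠ ⊤ := by
  rw [Kc, ← ofReal_integral_eq_lintegral_ofReal (Kc_integrableOn hn hb2 hbn) ?_]
  · exact ENNReal.ofReal_ne_top
  · filter_upwards [self_mem_ae_restrict (measurableSet_Ioi : MeasurableSet (Ioi (0:ℝ)))]
      with v hv
    have hv' : (0:ℝ) < v := hv
    positivity

/-! ### The real form of the Riesz potential of the standard bubble -/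

private noncomputable def Dn (n : ℕ) (a b : ℝ) : ℝ :=
  π ^ ((n:ℝ)/2) * Real.Gamma ((n:ℝ)/2) / (Real.Gamma a * Real.Gamma b) * (Kc n b).toReal

private lemma Dn_pos {n : ℕ} {a b : ℝ} (hn : 0 < n) (ha : 0 < a) (hb2 : (n:ℝ)/2 < b)
    (hbn : b < n) : 0 < Dn n a b := by
  have hn' : (0:ℝ) < n := by exact_mod_cast hn
  have hb : (0:ℝ) < b := by linarith
  have hGa := Real.Gamma_pos_of_pos ha
  have hGb := Real.Gamma_pos_of_pos hb
  have hGn := Real.Gamma_pos_of_pos (show (0:ℝ) < (n:ℝ)/2 by linarith)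
  have hK : 0 < (Kc n b).toReal :=
    ENNReal.toReal_pos (Kc_pos n b) (Kc_ne_top hn hb2 hbn)
  have hπ : (0:ℝ) < π ^ ((n:ℝ)/2) := Real.rpow_pos_of_pos Real.pi_pos _
  unfold Dn
  positivity

private theorem main_real {n : ℕ} (hn : 0 < n) {a b : ℝ} (ha : 0 < a) (hb2 : (n:ℝ)/2 < b)
    (hab : a + b = n) (x : EuclideanSpace ℝ (Fin n)) :
    ∫ y : EuclideanSpace ℝ (Fin n), ‖x - y‖ ^ (-(2*a)) * (1 + ‖y‖^2) ^ (-b)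
      = Dn n a b * (1 + ‖x‖^2) ^ (-a) := by
  have hn' : (0:ℝ) < n := by exact_mod_cast hn
  have hb : (0:ℝ) < b := by linarith
  have hbn : b < n := by linarith
  have hGa := Real.Gamma_pos_of_pos ha
  have hGb := Real.Gamma_pos_of_pos hb
  have hGn := Real.Gamma_pos_of_pos (show (0:ℝ) < (n:ℝ)/2 by linarith)
  have hπ : (0:ℝ) < π ^ ((n:ℝ)/2) := Real.rpow_pos_of_pos Real.pi_pos _
  rw [integral_eq_lintegral_of_nonneg_ae
      (Eventually.of_forall fun y => by positivity)
      ((by fun_prop : Measurable fun y : EuclideanSpace ℝ (Fin n) =>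
        ‖x - y‖ ^ (-(2*a)) * (1 + ‖y‖^2) ^ (-b)).aestronglyMeasurable),
    main_lint hn ha hb hab x]
  rw [ENNReal.toReal_mul, ENNReal.toReal_mul, ENNReal.toReal_mul, ENNReal.toReal_inv,
    ENNReal.toReal_ofReal (by positivity), ENNReal.toReal_ofReal (by positivity),
    ENNReal.toReal_ofReal (by positivity)]
  unfold Dn
  field_simp

end BubbleAux

/-- There is a constant `c = c(n, α) > 0` such that for every `t > 0` and
`x₀ ∈ ℝⁿ`, the function `u(x) = c (t/(t² + |x - x₀|²))^{(n-α)/2}` solves the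
critical integral equation. -/
theorem standard_bubble_solution
    (n : ℕ) (hn : 0 < n) (α : ℝ) (hα0 : 0 < α) (hαn : α < n) :
    ∃ c > (0 : ℝ), ∀ t > (0 : ℝ), ∀ x₀ x : EuclideanSpace ℝ (Fin n),
      c * (t / (t ^ 2 + ‖x - x₀‖ ^ 2)) ^ (((n : ℝ) - α) / 2) =
        ∫ y : EuclideanSpace ℝ (Fin n),
          ‖x - y‖ ^ (-((n : ℝ) - α)) *
            (c * (t / (t ^ 2 + ‖y - x₀‖ ^ 2)) ^ (((n : ℝ) - α) / 2)) ^
              (((n : ℝ) + α) / ((n : ℝ) - α)) := by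
  have hn' : (0:ℝ) < n := by exact_mod_cast hn
  have hlam : (0:ℝ) < (n:ℝ) - α := by linarith
  set a : ℝ := ((n:ℝ) - α) / 2 with ha_def
  set b : ℝ := ((n:ℝ) + α) / 2 with hb_def
  set q : ℝ := ((n:ℝ) + α) / ((n:ℝ) - α) with hq_def
  have ha : 0 < a := by rw [ha_def]; linarith
  have hb2 : (n:ℝ)/2 < b := by rw [hb_def]; linarith
  have hbn : b < n := by rw [hb_def]; linarith
  have hab : a + b = n := by rw [ha_def, hb_def]; ring
  have hD : 0 < Dn n a b := Dn_pos hn ha hb2 hbn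
  set c : ℝ := (Dn n a b) ^ (-(((n:ℝ) - α) / (2*α))) with hc_def
  have hc : 0 < c := Real.rpow_pos_of_pos hD _
  have hcq : c ^ q * Dn n a b = c := by
    have he : (-(((n:ℝ) - α) / (2*α))) * q + 1 = -(((n:ℝ) - α) / (2*α)) := by
      rw [hq_def]
      field_simp
      ring
    calc c ^ q * Dn n a b
        = Dn n a b ^ ((-(((n:ℝ) - α) / (2*α))) * q) * Dn n a b ^ (1:ℝ) := by
          rw [hc_def, ← Real.rpow_mul hD.le, Real.rpow_one]
      _ = Dn n a b ^ ((-(((n:ℝ) - α) / (2*α))) * q + 1) := (Real.rpow_add hD _ _).symm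
      _ = c := by rw [he, hc_def]
  refine ⟨c, hc, fun t ht x₀ x => ?_⟩
  have hpt : ∀ y : EuclideanSpace ℝ (Fin n),
      ‖x - y‖ ^ (-((n:ℝ) - α)) * (c * (t / (t ^ 2 + ‖y - x₀‖ ^ 2)) ^ a) ^ q
        = c ^ q * (‖x - y‖ ^ (-(2*a)) * (t / (t ^ 2 + ‖y - x₀‖ ^ 2)) ^ b) := by
    intro y
    have hden : (0:ℝ) < t ^ 2 + ‖y - x₀‖ ^ 2 := by positivity
    have hz : (0:ℝ) ≤ t / (t ^ 2 + ‖y - x₀‖ ^ 2) := div_nonneg ht.le hden.le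
    rw [Real.mul_rpow hc.le (Real.rpow_nonneg hz a), ← Real.rpow_mul hz]
    have haq : a * q = b := by
      rw [ha_def, hb_def, hq_def]
      field_simp
    rw [haq, show -((n:ℝ) - α) = -(2*a) by rw [ha_def]; ring]
    ring
  have hint : ∫ y : EuclideanSpace ℝ (Fin n),
      ‖x - y‖ ^ (-((n:ℝ) - α)) * (c * (t / (t ^ 2 + ‖y - x₀‖ ^ 2)) ^ a) ^ q
      = c ^ q * ∫ y : EuclideanSpace ℝ (Fin n),
          ‖x - y‖ ^ (-(2*a)) * (t / (t ^ 2 + ‖y - x₀‖ ^ 2)) ^ b := by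
    simp only [hpt]
    rw [integral_const_mul]
  rw [hint]
  -- change of variables
  set w : EuclideanSpace ℝ (Fin n) := t⁻¹ • (x - x₀) with hw_def
  have htw : t • w = x - x₀ := smul_inv_smul₀ (ne_of_gt ht) _
  have hfrac : ∀ z : EuclideanSpace ℝ (Fin n),
      t / (t ^ 2 + ‖t • z‖ ^ 2) = t⁻¹ * (1 + ‖z‖ ^ 2)⁻¹ := by
    intro z
    have h1 : (0:ℝ) < 1 + ‖z‖ ^ 2 := by positivity
    rw [norm_smul, Real.norm_eq_abs, mul_pow, sq_abs,
      show t ^ 2 + t ^ 2 * ‖z‖ ^ 2 = t ^ 2 * (1 + ‖z‖ ^ 2) by ring]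
    field_simp
  have hsm : ∀ (e : ℝ) (z : EuclideanSpace ℝ (Fin n)),
      (t⁻¹ * (1 + ‖z‖ ^ 2)⁻¹) ^ e = t ^ (-e) * (1 + ‖z‖ ^ 2) ^ (-e) := by
    intro e z
    have h1 : (0:ℝ) < 1 + ‖z‖ ^ 2 := by positivity
    rw [Real.mul_rpow (by positivity) (by positivity), Real.inv_rpow ht.le,
      Real.inv_rpow h1.le, ← Real.rpow_neg ht.le, ← Real.rpow_neg h1.le]
  have hF : ∫ y : EuclideanSpace ℝ (Fin n),
      ‖x - y‖ ^ (-(2*a)) * (t / (t ^ 2 + ‖y - x₀‖ ^ 2)) ^ b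
      = t ^ (-a) * (Dn n a b * (1 + ‖w‖ ^ 2) ^ (-a)) := by
    have h1 : ∫ y : EuclideanSpace ℝ (Fin n),
        ‖x - y‖ ^ (-(2*a)) * (t / (t ^ 2 + ‖y - x₀‖ ^ 2)) ^ b
        = ∫ y : EuclideanSpace ℝ (Fin n),
            ‖x - (x₀ + y)‖ ^ (-(2*a)) * (t / (t ^ 2 + ‖y‖ ^ 2)) ^ b := by
      rw [← integral_add_left_eq_self
        (fun y : EuclideanSpace ℝ (Fin n) =>
          ‖x - y‖ ^ (-(2*a)) * (t / (t ^ 2 + ‖y - x₀‖ ^ 2)) ^ b) x₀]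
      simp only [add_sub_cancel_left]
    have h2 : ∫ y : EuclideanSpace ℝ (Fin n),
        ‖x - (x₀ + y)‖ ^ (-(2*a)) * (t / (t ^ 2 + ‖y‖ ^ 2)) ^ b
        = (t ^ n : ℝ) • ∫ y : EuclideanSpace ℝ (Fin n),
            ‖x - (x₀ + t • y)‖ ^ (-(2*a)) * (t / (t ^ 2 + ‖t • y‖ ^ 2)) ^ b := by
      rw [Measure.integral_comp_smul volume
        (fun y : EuclideanSpace ℝ (Fin n) =>
          ‖x - (x₀ + y)‖ ^ (-(2*a)) * (t / (t ^ 2 + ‖y‖ ^ 2)) ^ b) t,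
        finrank_euclideanSpace_fin, smul_smul,
        abs_of_pos (inv_pos.mpr (pow_pos ht n)), mul_inv_cancel₀ (ne_of_gt (pow_pos ht n)),
        one_smul]
    have h3 : ∀ y : EuclideanSpace ℝ (Fin n),
        ‖x - (x₀ + t • y)‖ ^ (-(2*a)) * (t / (t ^ 2 + ‖t • y‖ ^ 2)) ^ b
        = (t ^ (-(2*a)) * t ^ (-b)) * (‖w - y‖ ^ (-(2*a)) * (1 + ‖y‖ ^ 2) ^ (-b)) := by
      intro y
      have hxy : x - (x₀ + t • y) = t • (w - y) := by
        rw [smul_sub, htw]; abel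
      rw [hxy, hfrac y, hsm b y, norm_smul, Real.norm_eq_abs, abs_of_pos ht,
        Real.mul_rpow ht.le (norm_nonneg _)]
      ring
    have hts : (t : ℝ) ^ (n : ℕ) * (t ^ (-(2*a)) * t ^ (-b)) = t ^ (-a) := by
      rw [← Real.rpow_natCast t n, ← Real.rpow_add ht, ← Real.rpow_add ht]
      congr 1
      rw [ha_def, hb_def]
      ring
    rw [h1, h2]
    simp only [h3]
    rw [integral_const_mul, main_real hn ha hb2 hab w, smul_eq_mul, ← mul_assoc, hts]
  rw [hF]
  have hLHS : (t / (t ^ 2 + ‖x - x₀‖ ^ 2)) ^ a = t ^ (-a) * (1 + ‖w‖ ^ 2) ^ (-a) := by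
    rw [← htw, hfrac w, hsm a w]
  rw [hLHS, show c ^ q * (t ^ (-a) * (Dn n a b * (1 + ‖w‖ ^ 2) ^ (-a)))
    = (c ^ q * Dn n a b) * (t ^ (-a) * (1 + ‖w‖ ^ 2) ^ (-a)) by ring, hcq]
end
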